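/- arXiv:math/9808074 — 2 statements merged into one kernel-verified Lean document; each statement's English description precedes it below -/
import Mathlib

section
/- Let k be a field of characteristic 2, λ ∈ k with λ ≠ 0 and λ ≠ 1, s ∈ k with s² = λ, and t ∈ k with t² = 1 + λ + s. Then one has the polynomial identity F(X + s, Y + λ + s) = X³ + (Y + tX)², where F(X,Y) = Y² − X(X−1)(X−λ). In particular the homogeneous quadratic part of F at its singular point (s, λ+s) is the square of a linear form (a double line), so the singular point is not a node. -/
open MvPolynomial

/-- The affine Legendre polynomial `F(X, Y) = Y² − X(X−1)(X−λ)`, as a polynomial in the two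
variables `X = X 0` and `Y = X 1` over `k`. -/
noncomputable def legendrePoly (k : Type*) [CommRing k] (lam : k) : MvPolynomial (Fin 2) k :=
  X 1 ^ 2 - X 0 * (X 0 - 1) * (X 0 - C lam)

/-- Over a field `k` of characteristic 2, with `λ ≠ 0, 1`, `s² = λ` and `t² = 1 + λ + s`, one has
the polynomial identity `F(X + s, Y + λ + s) = X³ + (Y + tX)²` for the Legendre polynomial
`F(X,Y) = Y² − X(X−1)(X−λ)`.  In particular the quadratic part of `F` at its singular point
`(s, λ + s)` is the square of a linear form, so the singular point is not a node. -/
theorem legendre_at_singular_point_char_two {k : Type*} [Field k] [CharP k 2] (lam s t : k)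
    (hlam0 : lam ≠ 0) (hlam1 : lam ≠ 1) (hs : s ^ 2 = lam) (ht : t ^ 2 = 1 + lam + s) :
    bind₁ ![X 0 + C s, X 1 + C (lam + s)] (legendrePoly k lam) =
      X 0 ^ 3 + (X 1 + C t * X 0) ^ 2 := by
  subst hs
  have h2 : (2 : MvPolynomial ℕ k) = 0 := CharTwo.two_eq_zero
  have h4 : (4 : MvPolynomial ℕ k) = 0 := by
    rw [show (4 : MvPolynomial ℕ k) = 2 * 2 by norm_num, h2, mul_zero]
  have h3 : (3 : MvPolynomial ℕ k) = 1 := by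
    rw [show (3 : MvPolynomial ℕ k) = 2 + 1 by norm_num, h2, zero_add]
  rw [CharTwo.add_sq (X 1) (C t * X 0), mul_pow, ← map_pow, ht]
  simp only [legendrePoly, map_sub, map_mul, map_pow, map_one, map_add, bind₁_X_right,
    bind₁_C_right, Matrix.cons_val_zero, Matrix.cons_val_one, Matrix.head_cons]
  ring_nf
  simp only [h2, h3, h4, CharTwo.sub_eq_add, mul_zero, mul_one, zero_add, add_zero]
end

section
/- Let F be an algebraically closed field of characteristic 2 and let W be an elliptic curve over F given by a Weierstrass equation with Δ ≠ 0. Then the j-invariant of W is 0 if and only if the only point P of W with P + P = 0 is the point at infinity; that is, W is supersingular (its group of points has trivial 2-torsion) precisely when j = 0. -/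
open WeierstrassCurve WeierstrassCurve.Affine

open Classical in
/-- Let `F` be an algebraically closed field of characteristic 2 and let `W` be an elliptic curve
over `F` (a Weierstrass curve with invertible discriminant).  Then the j-invariant of `W` is `0`
if and only if the only point `P` of `W` with `P + P = 0` is the point at infinity, i.e. `W` is
supersingular (trivial 2-torsion) precisely when `j = 0`. -/
theorem j_eq_zero_iff_two_torsion_trivial_char_two {F : Type*} [Field F] [IsAlgClosed F]
    [CharP F 2] (W : WeierstrassCurve F) [W.IsElliptic] :
    W.j = 0 ↔ ∀ P : W.toAffine.Point, P + P = 0 → P = 0 := by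
  haveI : CharP F 2 := ‹_›
  have h2 : (2 : F) = 0 := by exact_mod_cast CharP.cast_eq_zero F 2
  have hΔ : W.Δ ≠ 0 := W.isUnit_Δ.ne_zero
  rw [W.j_eq_zero_iff_of_char_two]
  constructor
  · intro ha₁ P hP
    rw [add_eq_zero_iff_eq_neg] at hP
    cases P with
    | zero => rfl
    | @some x y h =>
      rw [WeierstrassCurve.Affine.Point.neg_some] at hP
      have hy : y = W.toAffine.negY x y := by
        injection hP
      rw [negY, ha₁] at hy
      have ha₃ : W.a₃ = 0 := by linear_combination hy - y * h2
      exfalso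
      apply hΔ
      rw [W.Δ_of_char_two, ha₁, ha₃]
      ring
  · intro hT
    by_contra ha₁
    set x : F := W.a₃ / W.a₁ with hx
    obtain ⟨y, hy⟩ := IsAlgClosed.exists_pow_nat_eq
      (x ^ 3 + W.a₂ * x ^ 2 + W.a₄ * x + W.a₆) (n := 2) two_pos
    have hlin : W.a₁ * x + W.a₃ = 0 := by
      rw [hx]
      field_simp
      linear_combination W.a₃ * h2
    have heq : W.toAffine.Equation x y := by
      rw [equation_iff]
      linear_combination hy + y * hlin
    have hns : W.toAffine.Nonsingular x y := (W.toAffine.equation_iff_nonsingular_of_Δ_ne_zero hΔ).mp heq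
    have hyneg : y = W.toAffine.negY x y := by
      rw [negY]
      linear_combination y * h2 + hlin
    have hPP : Point.some _ _ hns + Point.some _ _ hns = 0 := by
      rw [add_eq_zero_iff_eq_neg, WeierstrassCurve.Affine.Point.neg_some]
      congr 1
    exact Point.some_ne_zero hns (hT _ hPP)
end
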